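/- Let A_m ∈ ℝ^{n×n}, B ∈ ℝ^{n×m}, and let P, Q ∈ ℝ^{n×n} be symmetric positive definite with A_m^⊤ P A_m − P = −Q. Suppose x' = A_m x + B r + B ε with ‖r‖ ≤ r_max, x ≠ 0, and define V(x) = x^⊤ P x. If for some constant c₁ > 0 we have λ_min(Q) − 2‖A_m^⊤ P B‖₂ (r_max + ‖ε‖)/‖x‖ − 2‖B^⊤ P B‖₂ (r_max² + ‖ε‖²)/‖x‖² ≥ c₁, then V(x') − V(x) ≤ −(c₁/λ_max(P)) V(x). -/

import Mathlib

open scoped BigOperators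
open Matrix

/-- The spectral (L2 operator) norm of a real matrix. -/
noncomputable def specNorm {a b : ℕ} (M : Matrix (Fin a) (Fin b) ℝ) : ℝ :=
  ‖LinearMap.toContinuousLinearMap (Matrix.toEuclideanLin M)‖

lemma enorm_eq {k : ℕ} (y : Fin k → ℝ) :
    ‖(WithLp.equiv 2 (Fin k → ℝ)).symm y‖ = Real.sqrt (∑ i, y i ^ 2) := by
  rw [EuclideanSpace.norm_eq]
  simp [sq_abs]

lemma specNorm_nonneg {a b : ℕ} (M : Matrix (Fin a) (Fin b) ℝ) : 0 ≤ specNorm M :=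
  norm_nonneg _

lemma dot_mulVec_le {a b : ℕ} (M : Matrix (Fin a) (Fin b) ℝ) (v : Fin a → ℝ) (w : Fin b → ℝ) :
    v ⬝ᵥ M.mulVec w ≤ specNorm M * Real.sqrt (∑ i, v i ^ 2) * Real.sqrt (∑ i, w i ^ 2) := by
  have h1 : v ⬝ᵥ M.mulVec w
      = inner ℝ ((WithLp.equiv 2 (Fin a → ℝ)).symm v)
          (Matrix.toEuclideanLin M ((WithLp.equiv 2 (Fin b → ℝ)).symm w)) := by
    rw [WithLp.equiv_symm_apply, WithLp.equiv_symm_apply, Matrix.toEuclideanLin_apply_piLp_toLp]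
    simp [PiLp.inner_apply, dotProduct, mul_comm]
  rw [h1]
  calc inner ℝ ((WithLp.equiv 2 (Fin a → ℝ)).symm v)
        (Matrix.toEuclideanLin M ((WithLp.equiv 2 (Fin b → ℝ)).symm w))
      ≤ ‖(WithLp.equiv 2 (Fin a → ℝ)).symm v‖ *
        ‖Matrix.toEuclideanLin M ((WithLp.equiv 2 (Fin b → ℝ)).symm w)‖ :=
        real_inner_le_norm _ _
    _ ≤ ‖(WithLp.equiv 2 (Fin a → ℝ)).symm v‖ *
        (specNorm M * ‖(WithLp.equiv 2 (Fin b → ℝ)).symm w‖) := by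
        gcongr
        exact (LinearMap.toContinuousLinearMap (Matrix.toEuclideanLin M)).le_opNorm _
    _ = specNorm M * Real.sqrt (∑ i, v i ^ 2) * Real.sqrt (∑ i, w i ^ 2) := by
        rw [enorm_eq, enorm_eq]; ring

lemma rayleigh {k : ℕ} {M : Matrix (Fin k) (Fin k) ℝ} (hM : M.IsHermitian) (y : Fin k → ℝ) :
    ∃ z : Fin k → ℝ, (∑ i, z i ^ 2 = ∑ i, y i ^ 2) ∧
      y ⬝ᵥ M.mulVec y = ∑ i, hM.eigenvalues i * z i ^ 2 := by
  classical
  set U : Matrix (Fin k) (Fin k) ℝ := (hM.eigenvectorUnitary : Matrix (Fin k) (Fin k) ℝ) with hU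
  have hUU : U * star U = 1 := (Matrix.mem_unitaryGroup_iff).mp hM.eigenvectorUnitary.2
  have hUT : (star U)ᵀ = U := by
    ext i j
    simp [Matrix.star_eq_conjTranspose, Matrix.conjTranspose_apply]
  have hUT2 : Uᵀ = star U := by
    ext i j
    simp [Matrix.star_eq_conjTranspose, Matrix.conjTranspose_apply]
  set z : Fin k → ℝ := (star U) *ᵥ y with hz
  refine ⟨z, ?_, ?_⟩
  · have h : z ⬝ᵥ z = y ⬝ᵥ y := by
      rw [hz, Matrix.dotProduct_mulVec, ← Matrix.mulVec_transpose,
        Matrix.mulVec_mulVec, hUT, hUU, Matrix.one_mulVec]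
    simpa [dotProduct, sq] using h
  · have hst : M = U * Matrix.diagonal hM.eigenvalues * star U := by
      have := hM.spectral_theorem
      simpa using this
    conv_lhs => rw [hst]
    rw [← Matrix.mulVec_mulVec, ← Matrix.mulVec_mulVec, Matrix.dotProduct_mulVec (A := U),
      ← Matrix.mulVec_transpose, hUT2, ← hz]
    simp only [Matrix.mulVec_diagonal, dotProduct]
    exact Finset.sum_congr rfl fun i _ => by ring

lemma dot_swap {a b : ℕ} (M : Matrix (Fin a) (Fin b) ℝ) (v : Fin b → ℝ) (w : Fin a → ℝ) :
    (M *ᵥ v) ⬝ᵥ w = v ⬝ᵥ (Mᵀ *ᵥ w) := by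
  rw [dotProduct_comm, Matrix.dotProduct_mulVec, ← Matrix.mulVec_transpose,
    dotProduct_comm]

lemma dot_swap2 {a b : ℕ} (M : Matrix (Fin a) (Fin b) ℝ) (v : Fin a → ℝ) (w : Fin b → ℝ) :
    v ⬝ᵥ (M *ᵥ w) = w ⬝ᵥ (Mᵀ *ᵥ v) := by
  rw [Matrix.dotProduct_mulVec, ← Matrix.mulVec_transpose, dotProduct_comm]

lemma expandV {n m : ℕ} (Am P Q : Matrix (Fin n) (Fin n) ℝ) (B : Matrix (Fin n) (Fin m) ℝ)
    (hPsym : Pᵀ = P) (hAPA : Amᵀ * P * Am = P - Q) (x : Fin n → ℝ) (v : Fin m → ℝ) :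
    (Am *ᵥ x + B *ᵥ v) ⬝ᵥ P *ᵥ (Am *ᵥ x + B *ᵥ v) - x ⬝ᵥ P *ᵥ x
      = -(x ⬝ᵥ Q *ᵥ x) + 2 * (x ⬝ᵥ (Amᵀ * P * B) *ᵥ v) + v ⬝ᵥ (Bᵀ * P * B) *ᵥ v := by
  have e1 : (Am *ᵥ x) ⬝ᵥ P *ᵥ (Am *ᵥ x) = x ⬝ᵥ P *ᵥ x - x ⬝ᵥ Q *ᵥ x := by
    rw [dot_swap, Matrix.mulVec_mulVec, Matrix.mulVec_mulVec, hAPA,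
      Matrix.sub_mulVec, dotProduct_sub]
  have e2 : (Am *ᵥ x) ⬝ᵥ P *ᵥ (B *ᵥ v) = x ⬝ᵥ (Amᵀ * P * B) *ᵥ v := by
    rw [dot_swap, Matrix.mulVec_mulVec, Matrix.mulVec_mulVec, Matrix.mul_assoc]
  have e3 : (B *ᵥ v) ⬝ᵥ P *ᵥ (Am *ᵥ x) = x ⬝ᵥ (Amᵀ * P * B) *ᵥ v := by
    rw [dot_swap, Matrix.mulVec_mulVec, Matrix.mulVec_mulVec, dot_swap2,
      Matrix.transpose_mul, Matrix.transpose_mul, Matrix.transpose_transpose, hPsym,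
      Matrix.mul_assoc]
  have e4 : (B *ᵥ v) ⬝ᵥ P *ᵥ (B *ᵥ v) = v ⬝ᵥ (Bᵀ * P * B) *ᵥ v := by
    rw [dot_swap, Matrix.mulVec_mulVec, Matrix.mulVec_mulVec, Matrix.mul_assoc]
  rw [Matrix.mulVec_add, dotProduct_add, add_dotProduct, add_dotProduct,
    e1, e2, e3, e4]
  ring

set_option maxHeartbeats 1600000 in
/-- one-step decrease of the Lyapunov function V(x) = x^⊤Px
    along the perturbed stable dynamics x' = A_m x + B r + B ε, under the
    stated lower bound involving λ_min(Q). -/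
theorem lyapunov_one_step_decrease {n m : ℕ}
    (Am : Matrix (Fin n) (Fin n) ℝ) (B : Matrix (Fin n) (Fin m) ℝ)
    (P Q : Matrix (Fin n) (Fin n) ℝ) (hP : P.PosDef) (hQ : Q.PosDef)
    (hLyap : Amᵀ * P * Am - P = -Q)
    (x : Fin n → ℝ) (r ε : Fin m → ℝ) (rmax c₁ : ℝ)
    (hr : Real.sqrt (∑ i, r i ^ 2) ≤ rmax)
    (hx : x ≠ 0) (hc₁ : 0 < c₁)
    (hcond : (⨅ i, hQ.1.eigenvalues i)
        - 2 * specNorm (Amᵀ * P * B)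
            * (rmax + Real.sqrt (∑ i, ε i ^ 2)) / Real.sqrt (∑ i, x i ^ 2)
        - 2 * specNorm (Bᵀ * P * B)
            * (rmax ^ 2 + (Real.sqrt (∑ i, ε i ^ 2)) ^ 2)
            / (Real.sqrt (∑ i, x i ^ 2)) ^ 2
      ≥ c₁) :
    let x' := Am.mulVec x + B.mulVec r + B.mulVec ε
    x' ⬝ᵥ P.mulVec x' - x ⬝ᵥ P.mulVec x
      ≤ -(c₁ / ⨆ i, hP.1.eigenvalues i) * (x ⬝ᵥ P.mulVec x) := by
  classical
  intro x'
  haveI hne : Nonempty (Fin n) := by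
    rcases Nat.eq_zero_or_pos n with h | h
    · exact absurd (funext fun i => (h ▸ i).elim0) hx
    · exact ⟨⟨0, h⟩⟩
  have hPsym : Pᵀ = P := by
    have := hP.1
    simpa [Matrix.IsHermitian, Matrix.conjTranspose_eq_transpose_of_trivial] using this
  have hAPA : Amᵀ * P * Am = P - Q := by
    have h := hLyap
    have : Amᵀ * P * Am = P + -Q := by
      have := sub_eq_iff_eq_add.mp h
      linear_combination (norm := skip) this
      abel
    rw [this]; abel
  have hx' : x' = Am *ᵥ x + B *ᵥ (r + ε) := by
    show Am *ᵥ x + B *ᵥ r + B *ᵥ ε = _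
    rw [Matrix.mulVec_add, add_assoc]
  have hexp : x' ⬝ᵥ P.mulVec x' - x ⬝ᵥ P.mulVec x
      = -(x ⬝ᵥ Q.mulVec x) + 2 * (x ⬝ᵥ (Amᵀ * P * B).mulVec (r + ε))
        + (r + ε) ⬝ᵥ (Bᵀ * P * B).mulVec (r + ε) := by
    rw [hx']; exact expandV Am P Q B hPsym hAPA x (r + ε)
  set nx := Real.sqrt (∑ i, x i ^ 2) with hnx
  set nε := Real.sqrt (∑ i, ε i ^ 2) with hnε
  set nv := Real.sqrt (∑ i, (r + ε) i ^ 2) with hnv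
  set s1 := specNorm (Amᵀ * P * B) with hs1
  set s2 := specNorm (Bᵀ * P * B) with hs2
  set lQ := (⨅ i, hQ.1.eigenvalues i) with hlQ
  set lP := (⨆ i, hP.1.eigenvalues i) with hlP
  have hSpos : 0 < ∑ i, x i ^ 2 := by
    rcases (Finset.sum_nonneg fun i _ => sq_nonneg (x i)).lt_or_eq with h | h
    · exact h
    · exfalso
      apply hx
      funext i
      have h0 := (Finset.sum_eq_zero_iff_of_nonneg fun i _ => sq_nonneg (x i)).mp h.symm
        i (Finset.mem_univ i)
      exact (pow_eq_zero_iff two_ne_zero).mp h0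
  have hnxpos : 0 < nx := Real.sqrt_pos.mpr hSpos
  have hnxsq : nx ^ 2 = ∑ i, x i ^ 2 := Real.sq_sqrt hSpos.le
  have hnε0 : 0 ≤ nε := Real.sqrt_nonneg _
  have hnv0 : 0 ≤ nv := Real.sqrt_nonneg _
  have hrmax0 : 0 ≤ rmax := (Real.sqrt_nonneg _).trans hr
  have htri : nv ≤ rmax + nε := by
    have h2 : (WithLp.equiv 2 (Fin m → ℝ)).symm (r + ε)
        = (WithLp.equiv 2 (Fin m → ℝ)).symm r + (WithLp.equiv 2 (Fin m → ℝ)).symm ε := by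
      simp
    calc nv = ‖(WithLp.equiv 2 (Fin m → ℝ)).symm (r + ε)‖ := (enorm_eq _).symm
      _ ≤ ‖(WithLp.equiv 2 (Fin m → ℝ)).symm r‖ + ‖(WithLp.equiv 2 (Fin m → ℝ)).symm ε‖ := by
          rw [h2]; exact norm_add_le _ _
      _ ≤ rmax + nε := by rw [enorm_eq, enorm_eq]; exact add_le_add hr le_rfl
  have hQlow : lQ * (∑ i, x i ^ 2) ≤ x ⬝ᵥ Q.mulVec x := by
    obtain ⟨z, hz1, hz2⟩ := rayleigh hQ.1 x
    rw [hz2, ← hz1, Finset.mul_sum]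
    apply Finset.sum_le_sum
    intro i _
    exact mul_le_mul_of_nonneg_right
      (ciInf_le (Set.Finite.bddBelow (Set.finite_range _)) i) (sq_nonneg _)
  have hPhigh : x ⬝ᵥ P.mulVec x ≤ lP * (∑ i, x i ^ 2) := by
    obtain ⟨z, hz1, hz2⟩ := rayleigh hP.1 x
    rw [hz2, ← hz1, Finset.mul_sum]
    apply Finset.sum_le_sum
    intro i _
    exact mul_le_mul_of_nonneg_right
      (le_ciSup (Set.Finite.bddAbove (Set.finite_range _)) i) (sq_nonneg _)
  have hlPpos : 0 < lP := by
    obtain ⟨i⟩ := hne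
    exact lt_of_lt_of_le (hP.eigenvalues_pos i)
      (le_ciSup (Set.Finite.bddAbove (Set.finite_range _)) i)
  have hcross : x ⬝ᵥ (Amᵀ * P * B).mulVec (r + ε) ≤ s1 * nx * nv := dot_mulVec_le _ _ _
  have hquad : (r + ε) ⬝ᵥ (Bᵀ * P * B).mulVec (r + ε) ≤ s2 * nv * nv :=
    dot_mulVec_le (Bᵀ * P * B) (r + ε) (r + ε)
  have hs1n : 0 ≤ s1 := specNorm_nonneg _
  have hs2n : 0 ≤ s2 := specNorm_nonneg _
  have step1 : x' ⬝ᵥ P.mulVec x' - x ⬝ᵥ P.mulVec x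
      ≤ -(lQ * nx ^ 2) + 2 * s1 * nx * (rmax + nε) + 2 * s2 * (rmax ^ 2 + nε ^ 2) := by
    rw [hexp]
    have b1 : 2 * (x ⬝ᵥ (Amᵀ * P * B).mulVec (r + ε)) ≤ 2 * s1 * nx * (rmax + nε) := by
      have h : s1 * nx * nv ≤ s1 * nx * (rmax + nε) :=
        mul_le_mul_of_nonneg_left htri (by positivity)
      nlinarith [hcross]
    have b2 : (r + ε) ⬝ᵥ (Bᵀ * P * B).mulVec (r + ε) ≤ 2 * s2 * (rmax ^ 2 + nε ^ 2) := by
      have h1 : s2 * nv * nv ≤ s2 * ((rmax + nε) * (rmax + nε)) := by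
        have := mul_le_mul htri htri hnv0 (by positivity : (0:ℝ) ≤ rmax + nε)
        nlinarith
      nlinarith [hquad, sq_nonneg (rmax - nε)]
    have hq : lQ * nx ^ 2 ≤ x ⬝ᵥ Q.mulVec x := by rw [hnxsq]; exact hQlow
    linarith
  have step2 : -(lQ * nx ^ 2) + 2 * s1 * nx * (rmax + nε) + 2 * s2 * (rmax ^ 2 + nε ^ 2)
      ≤ -c₁ * nx ^ 2 := by
    have hcond' : c₁ ≤ lQ - 2 * s1 * (rmax + nε) / nx - 2 * s2 * (rmax ^ 2 + nε ^ 2) / nx ^ 2 :=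
      hcond
    have hmul := mul_le_mul_of_nonneg_right hcond' (sq_nonneg nx)
    have hne' : nx ≠ 0 := ne_of_gt hnxpos
    have key : (lQ - 2 * s1 * (rmax + nε) / nx - 2 * s2 * (rmax ^ 2 + nε ^ 2) / nx ^ 2) * nx ^ 2
        = lQ * nx ^ 2 - 2 * s1 * nx * (rmax + nε) - 2 * s2 * (rmax ^ 2 + nε ^ 2) := by
      field_simp
    rw [key] at hmul
    linarith
  have step3 : -c₁ * nx ^ 2 ≤ -(c₁ / lP) * (x ⬝ᵥ P.mulVec x) := by
    have h1 : (c₁ / lP) * (x ⬝ᵥ P.mulVec x) ≤ (c₁ / lP) * (lP * nx ^ 2) := by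
      apply mul_le_mul_of_nonneg_left _ (by positivity)
      rw [hnxsq]; exact hPhigh
    have h2 : (c₁ / lP) * (lP * nx ^ 2) = c₁ * nx ^ 2 := by
      field_simp
    linarith
  linarith
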